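/- Let s ∈ (0, 3/2) with s ≠ 1/2 and s ≠ 1, put α = 3 − 2s, and let p ≥ 2 be an integer. Then t_p(s) = Σ_{n=2}^∞ c_n^{(α)} · p^{α−2n}, where c_n^{(α)} = (2^{2n+1} − 8) · α(α−1)⋯(α−2n+1)/(2n)!, and the series converges. Moreover every coefficient c_n^{(α)} (n ≥ 2) has the sign of −(2s−1)(s−1). -/

import Mathlib

/-- `t_p(s)`, with the convention `0^(3-2s) = 0` (automatic for `rpow`). -/
noncomputable def tFn (s : ℝ) (p : ℕ) : ℝ :=
  |(p : ℝ) - 2| ^ (3 - 2 * s) - 4 * |(p : ℝ) - 1| ^ (3 - 2 * s) + 6 * (p : ℝ) ^ (3 - 2 * s)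
    - 4 * ((p : ℝ) + 1) ^ (3 - 2 * s) + ((p : ℝ) + 2) ^ (3 - 2 * s)

/-- The falling factorial `α(α-1)⋯(α-k+1)` with `k` factors. -/
noncomputable def fallProd (α : ℝ) (k : ℕ) : ℝ := ∏ i ∈ Finset.range k, (α - i)

/-- `c_n^{(α)} = (2^(2n+1) - 8) · α(α-1)⋯(α-2n+1) / (2n)!`. -/
noncomputable def cCoef (α : ℝ) (n : ℕ) : ℝ :=
  ((2 : ℝ) ^ (2 * n + 1) - 8) * fallProd α (2 * n) / (Nat.factorial (2 * n))



open Complex in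
lemma iteratedDeriv_one_add_cpow (α : ℝ) (n : ℕ) :
    ∀ z : ℂ, -1 < z.re →
    iteratedDeriv n (fun w : ℂ => (1 + w) ^ (α : ℂ)) z
      = (fallProd α n : ℂ) * (1 + z) ^ ((α : ℂ) - n) := by
  induction n with
  | zero => intro z hz; simp [fallProd]
  | succ n ih =>
    intro z hz
    have hopen : IsOpen {w : ℂ | -1 < w.re} := isOpen_lt continuous_const Complex.continuous_re
    have hev : iteratedDeriv n (fun w : ℂ => (1 + w) ^ (α : ℂ))
        =ᶠ[nhds z] fun w => (fallProd α n : ℂ) * (1 + w) ^ ((α : ℂ) - n) := by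
      filter_upwards [hopen.mem_nhds hz] with w hw
      exact ih w hw
    have hslit : (1 + z) ∈ Complex.slitPlane := by
      rw [Complex.mem_slitPlane_iff]
      left
      simpa using by linarith
    have hd : HasDerivAt (fun w : ℂ => (1 + w) ^ ((α : ℂ) - n))
        (((α : ℂ) - n) * (1 + z) ^ ((α : ℂ) - n - 1) * 1) z :=
      HasDerivAt.cpow_const ((hasDerivAt_id z).const_add 1) hslit
    rw [iteratedDeriv_succ, hev.deriv_eq]
    rw [deriv_const_mul _ hd.differentiableAt, hd.deriv]
    have : (fallProd α (n+1) : ℂ) = (fallProd α n : ℂ) * ((α : ℂ) - n) := by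
      simp [fallProd, Finset.prod_range_succ]
    rw [this]
    push_cast
    ring

lemma hasSum_binom_interior (α : ℝ) {x : ℝ} (hx : |x| < 1) :
    HasSum (fun k : ℕ => fallProd α k / (Nat.factorial k) * x ^ k) ((1 + x) ^ α) := by
  have hdiff : DifferentiableOn ℂ (fun w : ℂ => (1 + w) ^ (α : ℂ)) (Metric.ball 0 1) := by
    intro w hw
    have hw' : -1 < w.re := by
      have := Complex.abs_re_le_norm w
      simp [Metric.mem_ball, Complex.dist_eq] at hw
      have := abs_lt.mp (lt_of_le_of_lt (Complex.abs_re_le_norm w) hw)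
      linarith [this.1]
    have hslit : (1 + w) ∈ Complex.slitPlane := by
      rw [Complex.mem_slitPlane_iff]; left; simpa using by linarith
    exact (HasDerivAt.cpow_const ((hasDerivAt_id w).const_add 1) hslit).differentiableAt.differentiableWithinAt
  have hzball : (x : ℂ) ∈ Metric.ball (0 : ℂ) 1 := by
    simp [Metric.mem_ball, Complex.dist_eq, Complex.norm_real, hx]
  have H := Complex.hasSum_taylorSeries_on_ball hdiff hzball
  have hx1 : (0:ℝ) ≤ 1 + x := by have := abs_lt.mp hx; linarith [this.1]
  have hre : ∀ k : ℕ, ((Nat.factorial k : ℂ))⁻¹ • ((x : ℂ) - 0) ^ k •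
        iteratedDeriv k (fun w : ℂ => (1 + w) ^ (α : ℂ)) 0
      = ((fallProd α k / (Nat.factorial k) * x ^ k : ℝ) : ℂ) := by
    intro k
    rw [iteratedDeriv_one_add_cpow α k 0 (by norm_num)]
    simp only [sub_zero, smul_eq_mul, add_zero, Complex.one_cpow]
    push_cast
    ring
  rw [show ((1 : ℂ) + (x : ℂ)) ^ (α : ℂ) = (((1 + x) ^ α : ℝ) : ℂ) by
      rw [Complex.ofReal_cpow hx1]; push_cast; ring_nf] at H
  simp_rw [hre] at H
  exact Complex.hasSum_ofReal.mp H

lemma prod_Ico_telescope : ∀ m : ℕ, 3 ≤ m →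
    ∏ i ∈ Finset.Ico 3 m, ((i : ℝ) / ((i : ℝ) + 1)) = 3 / m := by
  intro m hm
  induction m, hm using Nat.le_induction with
  | base => norm_num
  | succ n hn ih =>
    rw [Finset.prod_Ico_succ_top hn, ih]
    have h1 : (n : ℝ) ≠ 0 := by positivity
    have h2 : (n : ℝ) + 1 ≠ 0 := by positivity
    field_simp
    norm_num

lemma abs_genBinom_le (α : ℝ) (hα0 : 0 < α) (hα3 : α < 3) (m : ℕ) (hm : 3 ≤ m) :
    |fallProd α m / (Nat.factorial m)| ≤
      (α * |α - 1| * |α - 2| / 6 * 3 ^ (1 + α)) * (1 / (m : ℝ)) ^ (1 + α) := by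
  have hfact : ((Nat.factorial m : ℝ)) = ∏ i ∈ Finset.range m, ((i : ℝ) + 1) := by
    rw [← Finset.prod_range_add_one_eq_factorial]
    push_cast
    rfl
  have habs : |fallProd α m / (Nat.factorial m)| =
      ∏ i ∈ Finset.range m, (|α - i| / ((i : ℝ) + 1)) := by
    rw [abs_div, Nat.abs_cast, hfact, fallProd, Finset.abs_prod, ← Finset.prod_div_distrib]
  rw [habs, ← Finset.prod_range_mul_prod_Ico _ hm]
  have hfront : ∏ i ∈ Finset.range 3, (|α - i| / ((i : ℝ) + 1)) = α * |α - 1| * |α - 2| / 6 := by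
    rw [Finset.prod_range_succ, Finset.prod_range_succ, Finset.prod_range_one]
    rw [abs_of_pos (by simpa using hα0)]
    push_cast
    ring
  rw [hfront]
  have hterm : ∀ i ∈ Finset.Ico 3 m, |α - i| / ((i : ℝ) + 1) ≤ ((i : ℝ) / ((i : ℝ) + 1)) ^ (1 + α) := by
    intro i hi
    have hi3 : 3 ≤ i := (Finset.mem_Ico.mp hi).1
    have hi3' : (3 : ℝ) ≤ i := by exact_mod_cast hi3
    have hip : (0 : ℝ) < (i : ℝ) + 1 := by linarith
    have habs' : |α - i| = (i : ℝ) - α := by rw [abs_of_nonpos (by linarith)]; ring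
    rw [habs']
    have hb := one_add_mul_self_le_rpow_one_add
      (s := -(1 / ((i : ℝ) + 1))) (by
        have hle : (1:ℝ)/((i:ℝ)+1) ≤ 1 := by
          rw [div_le_one hip]; linarith
        linarith)
      (p := 1 + α) (by linarith)
    calc ((i : ℝ) - α) / ((i : ℝ) + 1) = 1 + (1 + α) * -(1 / ((i : ℝ) + 1)) := by
          field_simp; ring
      _ ≤ (1 + -(1 / ((i : ℝ) + 1))) ^ (1 + α) := hb
      _ = ((i : ℝ) / ((i : ℝ) + 1)) ^ (1 + α) := by
          congr 1
          field_simp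
          ring
  have hprodle : ∏ i ∈ Finset.Ico 3 m, (|α - i| / ((i : ℝ) + 1)) ≤
      ∏ i ∈ Finset.Ico 3 m, ((i : ℝ) / ((i : ℝ) + 1)) ^ (1 + α) :=
    Finset.prod_le_prod (fun i _ => by positivity) hterm
  have hprodeq : ∏ i ∈ Finset.Ico 3 m, ((i : ℝ) / ((i : ℝ) + 1)) ^ (1 + α)
      = (3 / (m : ℝ)) ^ (1 + α) := by
    rw [Real.finset_prod_rpow _ _ (fun i _ => by positivity), prod_Ico_telescope m hm]
  have hK : (0 : ℝ) ≤ α * |α - 1| * |α - 2| / 6 := by positivity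
  calc α * |α - 1| * |α - 2| / 6 * ∏ i ∈ Finset.Ico 3 m, (|α - i| / ((i : ℝ) + 1))
      ≤ α * |α - 1| * |α - 2| / 6 * (3 / (m : ℝ)) ^ (1 + α) := by
        rw [← hprodeq]; exact mul_le_mul_of_nonneg_left hprodle hK
    _ = α * |α - 1| * |α - 2| / 6 * 3 ^ (1 + α) * (1 / (m : ℝ)) ^ (1 + α) := by
        rw [Real.div_rpow (by norm_num) (Nat.cast_nonneg m),
          Real.div_rpow (by norm_num) (Nat.cast_nonneg m), Real.one_rpow]
        ring

lemma summable_abs_genBinom (α : ℝ) (hα0 : 0 < α) (hα3 : α < 3) :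
    Summable (fun k : ℕ => |fallProd α k / (Nat.factorial k)|) := by
  rw [← summable_nat_add_iff 3]
  have hbase : Summable (fun n : ℕ => 1 / (n : ℝ) ^ (1 + α)) :=
    Real.summable_one_div_nat_rpow.mpr (by linarith)
  have hshift : Summable (fun n : ℕ => 1 / (((n + 3 : ℕ) : ℝ)) ^ (1 + α)) :=
    (summable_nat_add_iff 3).mpr hbase
  have hK : Summable (fun n : ℕ =>
      (α * |α - 1| * |α - 2| / 6 * 3 ^ (1 + α)) * (1 / (((n + 3 : ℕ) : ℝ)) ^ (1 + α))) :=
    hshift.mul_left _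
  apply Summable.of_nonneg_of_le (fun n => abs_nonneg _) _ hK
  intro n
  have h := abs_genBinom_le α hα0 hα3 (n + 3) (by omega)
  calc |fallProd α (n + 3) / (Nat.factorial (n + 3))|
      ≤ (α * |α - 1| * |α - 2| / 6 * 3 ^ (1 + α)) * (1 / ((n + 3 : ℕ) : ℝ)) ^ (1 + α) := h
    _ = (α * |α - 1| * |α - 2| / 6 * 3 ^ (1 + α)) * (1 / (((n + 3 : ℕ) : ℝ)) ^ (1 + α)) := by
        rw [Real.div_rpow (by norm_num) (Nat.cast_nonneg _), Real.one_rpow]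

lemma hasSum_binom_boundary (α : ℝ) (hα0 : 0 < α) (hα3 : α < 3) {c : ℝ}
    (hc : c = 1 ∨ c = -1) :
    HasSum (fun k : ℕ => fallProd α k / (Nat.factorial k) * c ^ k) ((1 + c) ^ α) := by
  set f : ℕ → ℝ := fun k => fallProd α k / (Nat.factorial k) * c ^ k with hf
  have hcabs : |c| = 1 := by rcases hc with h | h <;> simp [h]
  have hsummable : Summable f := by
    rw [← summable_abs_iff]
    refine (summable_abs_genBinom α hα0 hα3).congr fun k => ?_
    simp [hf, abs_mul, abs_pow, hcabs]
  have habel := Real.tendsto_tsum_powerSeries_nhdsWithin_lt hsummable.hasSum.tendsto_sum_nat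
  have heq : (fun x : ℝ => ∑' n, f n * x ^ n) =ᶠ[nhdsWithin 1 (Set.Iio 1)]
      (fun x : ℝ => (1 + c * x) ^ α) := by
    filter_upwards [Ioo_mem_nhdsLT_of_mem (show (1:ℝ) ∈ Set.Ioc (-1) 1 by constructor <;> norm_num)]
      with x hx
    have hcx : |c * x| < 1 := by
      rw [abs_mul, hcabs, one_mul]
      exact abs_lt.mpr ⟨hx.1, hx.2⟩
    have H := hasSum_binom_interior α hcx
    rw [← H.tsum_eq]
    congr 1
    funext k
    simp [hf, mul_pow, mul_assoc]
  have habel2 : Filter.Tendsto (fun x : ℝ => (1 + c * x) ^ α)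
      (nhdsWithin 1 (Set.Iio 1)) (nhds (∑' n, f n)) := habel.congr' heq
  have hcont : Filter.Tendsto (fun x : ℝ => (1 + c * x) ^ α)
      (nhdsWithin 1 (Set.Iio 1)) (nhds ((1 + c) ^ α)) := by
    have h1 : Filter.Tendsto (fun x : ℝ => 1 + c * x) (nhdsWithin 1 (Set.Iio 1)) (nhds (1 + c)) := by
      have hc1 : Filter.Tendsto (fun x : ℝ => 1 + c * x) (nhds 1) (nhds (1 + c * 1)) :=
        (continuous_const.add (continuous_const.mul continuous_id)).tendsto 1
      rw [mul_one] at hc1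
      exact hc1.mono_left nhdsWithin_le_nhds
    exact ((Real.continuousAt_rpow_const (1 + c) α (Or.inr hα0.le)).tendsto).comp h1
  have : (∑' n, f n) = (1 + c) ^ α := tendsto_nhds_unique habel2 hcont
  exact this ▸ hsummable.hasSum

lemma hasSum_binom (α : ℝ) (hα0 : 0 < α) (hα3 : α < 3) {x : ℝ} (hx0 : 0 < x) (hx1 : x ≤ 1) :
    HasSum (fun k : ℕ => fallProd α k / (Nat.factorial k) * x ^ k) ((1 + x) ^ α) ∧
    HasSum (fun k : ℕ => fallProd α k / (Nat.factorial k) * (-x) ^ k) ((1 - x) ^ α) := by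
  rcases eq_or_lt_of_le hx1 with rfl | hlt
  · constructor
    · exact hasSum_binom_boundary α hα0 hα3 (Or.inl rfl)
    · have := hasSum_binom_boundary α hα0 hα3 (Or.inr rfl)
      simpa using this
  · constructor
    · exact hasSum_binom_interior α (by rw [abs_of_pos hx0]; exact hlt)
    · have := hasSum_binom_interior α (x := -x) (by rw [abs_neg, abs_of_pos hx0]; exact hlt)
      simpa [sub_eq_add_neg] using this


lemma main_hasSum (α : ℝ) (hα0 : 0 < α) (hα3 : α < 3) (p : ℕ) (hp : 2 ≤ p) :
    HasSum (fun n : ℕ => cCoef α (n + 2) * ((1 / (p : ℝ)) ^ (2 * n + 4)))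
      ((1 + 2 * (1 / (p : ℝ))) ^ α + (1 - 2 * (1 / (p : ℝ))) ^ α
        - 4 * (1 + (1 / (p : ℝ))) ^ α - 4 * (1 - (1 / (p : ℝ))) ^ α + 6) := by
  set x : ℝ := 1 / (p : ℝ) with hxdef
  have hpp : (0 : ℝ) < p := by positivity
  have hx0 : 0 < x := by positivity
  have hx12 : x ≤ 1 / 2 := by
    rw [hxdef, div_le_div_iff₀ hpp (by norm_num)]
    have : (2 : ℝ) ≤ p := by exact_mod_cast hp
    linarith
  have h2x0 : 0 < 2 * x := by linarith
  have h2x1 : 2 * x ≤ 1 := by linarith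
  have H2 := hasSum_binom α hα0 hα3 h2x0 h2x1
  have H1 := hasSum_binom α hα0 hα3 hx0 (by linarith : x ≤ 1)
  set g : ℕ → ℝ := fun k => fallProd α k / (Nat.factorial k) with hg
  set u : ℕ → ℝ := fun k =>
    g k * ((2*x) ^ k + (-(2*x)) ^ k - 4 * x ^ k - 4 * (-x) ^ k) with hu
  have hU : HasSum u ((1 + 2*x) ^ α + (1 - 2*x) ^ α - 4 * (1 + x) ^ α - 4 * (1 - x) ^ α) := by
    have h := (H2.1.add H2.2).sub ((H1.1.add H1.2).mul_left 4)
    have he : u = fun k => g k * (2*x)^k + g k * (-(2*x))^k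
        - 4 * (g k * x^k + g k * (-x)^k) := by
      funext k; simp only [hu]; ring
    rw [he]
    convert h using 1
    · rfl
    ring
  set S : ℝ := (1 + 2*x) ^ α + (1 - 2*x) ^ α - 4 * (1 + x) ^ α - 4 * (1 - x) ^ α with hS
  have hu0 : u 0 = -6 := by simp [hu, hg, fallProd]; norm_num
  have hU1 : HasSum (fun n => u (n + 1)) (S + 6) := by
    rw [hasSum_nat_add_iff 1]
    convert hU using 1
    · rfl
    rw [Finset.sum_range_one, hu0]
    ring
  have hinj : Function.Injective (fun n : ℕ => 2 * n + 3) := by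
    intro a b hab; simpa using hab
  have hzero : ∀ m, m ∉ Set.range (fun n : ℕ => 2 * n + 3) → u (m + 1) = 0 := by
    intro m hm
    have hcase : Even m ∨ m = 1 := by
      rcases Nat.even_or_odd m with h | h
      · exact Or.inl h
      · obtain ⟨k, hk⟩ := h
        rcases Nat.eq_zero_or_pos k with hk0 | hk1
        · right; omega
        · exact absurd ⟨k - 1, by simp only []; omega⟩ hm
    rcases hcase with h | h
    · have hodd : Odd (m + 1) := Even.add_one h
      simp only [hu]
      rw [hodd.neg_pow, hodd.neg_pow]
      ring
    · subst h
      simp only [hu]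
      ring
  have hcomp := (hinj.hasSum_iff hzero).mpr hU1
  have hfun : (fun n : ℕ => cCoef α (n + 2) * x ^ (2 * n + 4))
      = ((fun n => u (n + 1)) ∘ (fun n : ℕ => 2 * n + 3)) := by
    funext n
    have heven : Even (2 * (n + 2)) := ⟨n + 2, by ring⟩
    simp only [Function.comp_apply, hu, hg, cCoef]
    have h1 : (2 * n + 3 + 1) = 2 * (n + 2) := by ring
    rw [h1, heven.neg_pow, heven.neg_pow, mul_pow]
    ring
  have := hfun ▸ hcomp
  convert this using 2 <;> ring

lemma sign_pos_mul {c y : ℝ} (hc : 0 < c) : Real.sign (c * y) = Real.sign y := by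
  rcases lt_trichotomy y 0 with h | h | h
  · rw [Real.sign_of_neg h, Real.sign_of_neg (mul_neg_of_pos_of_neg hc h)]
  · simp [h]
  · rw [Real.sign_of_pos h, Real.sign_of_pos (mul_pos hc h)]

lemma prod_Ico_neg (α : ℝ) (hα3 : α < 3) : ∀ n : ℕ, 2 ≤ n →
    ∏ i ∈ Finset.Ico 3 (2 * n), (α - (i : ℝ)) < 0 := by
  intro n hn
  induction n, hn using Nat.le_induction with
  | base =>
    have : Finset.Ico 3 (2 * 2) = {3} := by decide
    rw [this, Finset.prod_singleton]
    push_cast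
    linarith
  | succ n hn ih =>
    have h1 : 3 ≤ 2 * n := by omega
    have h2 : 3 ≤ 2 * n + 1 := by omega
    have hrw : 2 * (n + 1) = (2 * n + 1) + 1 := by ring
    rw [hrw, Finset.prod_Ico_succ_top (by omega), Finset.prod_Ico_succ_top h1]
    have e1 : α - ((2 * n : ℕ) : ℝ) < 0 := by
      have : (4 : ℝ) ≤ ((2 * n : ℕ) : ℝ) := by exact_mod_cast (by omega : 4 ≤ 2 * n)
      linarith
    have e2 : α - ((2 * n + 1 : ℕ) : ℝ) < 0 := by
      have : (4 : ℝ) ≤ ((2 * n + 1 : ℕ) : ℝ) := by exact_mod_cast (by omega : 4 ≤ 2 * n + 1)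
      linarith
    rw [mul_assoc]
    exact mul_neg_of_neg_of_pos ih (mul_pos_of_neg_of_neg e1 e2)

lemma fallProd_split (α : ℝ) (n : ℕ) (hn : 2 ≤ n) :
    fallProd α (2 * n) = (α * (α - 1) * (α - 2)) * ∏ i ∈ Finset.Ico 3 (2 * n), (α - (i : ℝ)) := by
  rw [fallProd, ← Finset.prod_range_mul_prod_Ico _ (by omega : 3 ≤ 2 * n)]
  congr 1
  rw [Finset.prod_range_succ, Finset.prod_range_succ, Finset.prod_range_one]
  push_cast
  ring


theorem stmt8 (s : ℝ) (hs : s ∈ Set.Ioo (0 : ℝ) (3 / 2)) (hs' : s ≠ 1 / 2) (hs1 : s ≠ 1)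
    (α : ℝ) (hα : α = 3 - 2 * s) (p : ℕ) (hp : 2 ≤ p) :
    HasSum (fun n : ℕ => cCoef α (n + 2) * (p : ℝ) ^ (α - 2 * ((n : ℝ) + 2))) (tFn s p) ∧
    ∀ n : ℕ, 2 ≤ n → Real.sign (cCoef α n) = Real.sign (-((2 * s - 1) * (s - 1))) := by
  obtain ⟨hs0, hs32⟩ := hs
  have hα0 : 0 < α := by rw [hα]; linarith
  have hα3 : α < 3 := by rw [hα]; linarith
  have hpp : (0 : ℝ) < p := by positivity
  have hp2 : (2 : ℝ) ≤ p := by exact_mod_cast hp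
  set x : ℝ := 1 / (p : ℝ) with hxdef
  have hx0 : 0 < x := by positivity
  have hx12 : x ≤ 1 / 2 := by
    rw [hxdef, div_le_div_iff₀ hpp (by norm_num)]
    linarith
  constructor
  · have H := (main_hasSum α hα0 hα3 p hp).mul_right ((p : ℝ) ^ α)
    have hfeq : (fun n : ℕ => cCoef α (n + 2) * (p : ℝ) ^ (α - 2 * ((n : ℝ) + 2)))
        = fun n : ℕ => cCoef α (n + 2) * x ^ (2 * n + 4) * (p : ℝ) ^ α := by
      funext n
      have hc : α - 2 * ((n : ℝ) + 2) = α - ((2 * n + 4 : ℕ) : ℝ) := by push_cast; ring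
      rw [hc, Real.rpow_sub hpp, Real.rpow_natCast]
      have hpn : ((p : ℝ)) ^ (2 * n + 4) ≠ 0 := by positivity
      rw [hxdef]
      field_simp
      rw [one_div, inv_pow, mul_assoc, mul_inv_cancel₀ hpn, mul_one]
    have hval : tFn s p
        = ((1 + 2 * x) ^ α + (1 - 2 * x) ^ α - 4 * (1 + x) ^ α - 4 * (1 - x) ^ α + 6)
          * (p : ℝ) ^ α := by
      have e1 : |(p : ℝ) - 2| = (p : ℝ) * (1 - 2 * x) := by
        rw [abs_of_nonneg (by linarith)]; rw [hxdef]; field_simp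
      have e2 : |(p : ℝ) - 1| = (p : ℝ) * (1 - x) := by
        rw [abs_of_nonneg (by linarith)]; rw [hxdef]; field_simp
      have e3 : (p : ℝ) + 1 = (p : ℝ) * (1 + x) := by rw [hxdef]; field_simp
      have e4 : (p : ℝ) + 2 = (p : ℝ) * (1 + 2 * x) := by rw [hxdef]; field_simp
      rw [tFn, show (3 - 2 * s) = α from hα.symm, e1, e2, e3, e4,
        Real.mul_rpow hpp.le (by linarith), Real.mul_rpow hpp.le (by linarith),
        Real.mul_rpow hpp.le (by linarith), Real.mul_rpow hpp.le (by linarith)]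
      ring
    rw [hfeq, hval]
    exact H
  · intro n hn
    set N : ℝ := ∏ i ∈ Finset.Ico 3 (2 * n), (α - (i : ℝ)) with hN
    have hNneg : N < 0 := prod_Ico_neg α hα3 n hn
    have hfact : (0 : ℝ) < (Nat.factorial (2 * n) : ℝ) := by
      exact_mod_cast Nat.factorial_pos (2 * n)
    have hpow : (32 : ℝ) ≤ 2 ^ (2 * n + 1) := by
      calc (32 : ℝ) = 2 ^ 5 := by norm_num
        _ ≤ 2 ^ (2 * n + 1) := pow_le_pow_right₀ (by norm_num) (by omega)
    have hCpos : 0 < ((2 : ℝ) ^ (2 * n + 1) - 8) * α * (-2 * N) / (Nat.factorial (2 * n)) := by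
      apply div_pos _ hfact
      apply mul_pos (mul_pos (by linarith) hα0)
      nlinarith
    have hc : cCoef α n
        = (((2 : ℝ) ^ (2 * n + 1) - 8) * α * (-2 * N) / (Nat.factorial (2 * n)))
          * (-((2 * s - 1) * (s - 1))) := by
      rw [cCoef, fallProd_split α n hn, ← hN, hα]
      field_simp
      ring
    rw [hc, sign_pos_mul hCpos]
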